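/- Let M be a real Z-matrix. Then M is a quasi M-matrix (all proper principal minors non-negative) if and only if M + εI is a quasi non-singular M-matrix (all proper principal minors strictly positive) for every ε > 0. -/

import Mathlib

/-- The principal minor of `M` indexed by the subset `s`. -/
noncomputable def principalMinor {n : ℕ} (M : Matrix (Fin n) (Fin n) ℝ)
    (s : Finset (Fin n)) : ℝ :=
  (M.submatrix (fun i : s => (i : Fin n)) (fun j : s => (j : Fin n))).det

/-- det of a matrix whose rows off `S` are identity rows equals the principal minor on `S`. -/
lemma det_piecewise_id {m : ℕ} (A : Matrix (Fin m) (Fin m) ℝ) (S : Finset (Fin m)) :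
    (Matrix.of (S.piecewise (fun i => A i)
        (fun i => (1 : Matrix (Fin m) (Fin m) ℝ) i))).det = principalMinor A S := by
  classical
  set N : Matrix (Fin m) (Fin m) ℝ := Matrix.of (S.piecewise (fun i => A i)
        (fun i => (1 : Matrix (Fin m) (Fin m) ℝ) i)) with hN
  set e : {a : Fin m // a ∈ S} ⊕ {a : Fin m // ¬ a ∈ S} ≃ Fin m := Equiv.sumCompl (· ∈ S)
  have h1 : N.submatrix e e =
      Matrix.fromBlocks (A.submatrix (fun i : S => (i : Fin m)) (fun j : S => (j : Fin m)))
        (Matrix.of fun (i : {a : Fin m // a ∈ S}) (j : {a : Fin m // ¬ a ∈ S}) => A i j)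
        0 1 := by
    ext i j
    cases i with
    | inl i =>
      cases j with
      | inl j => simp [N, e, Matrix.submatrix, Finset.piecewise, i.2]
      | inr j => simp [N, e, Matrix.submatrix, Finset.piecewise, i.2]
    | inr i =>
      cases j with
      | inl j =>
        have : (j : Fin m) ≠ (i : Fin m) := fun h => i.2 (h ▸ j.2)
        simp [N, e, Matrix.submatrix, Finset.piecewise, i.2, Matrix.one_apply, this.symm]
      | inr j =>
        simp [N, e, Matrix.submatrix, Finset.piecewise, i.2, j.2, Matrix.one_apply,
          Subtype.ext_iff]
        congr 1
  calc N.det = (N.submatrix e e).det := (Matrix.det_submatrix_equiv_self e N).symm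
    _ = principalMinor A S := by
        rw [h1, Matrix.det_fromBlocks_zero₂₁, Matrix.det_one, mul_one]
        rfl

lemma det_submatrix_injective {n : ℕ} {ι : Type} [Fintype ι] [DecidableEq ι]
    (M : Matrix (Fin n) (Fin n) ℝ) (u : ι → Fin n) (hu : Function.Injective u) :
    (M.submatrix u u).det = principalMinor M (Finset.image u Finset.univ) := by
  classical
  set s : Finset (Fin n) := Finset.image u Finset.univ with hs
  have hbij : Function.Bijective (fun i : ι => (⟨u i, by simp [hs]⟩ : {x : Fin n // x ∈ s})) := by
    constructor
    · intro a b h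
      exact hu (congrArg Subtype.val h)
    · rintro ⟨x, hx⟩
      obtain ⟨i, -, hi⟩ := Finset.mem_image.mp hx
      exact ⟨i, Subtype.ext hi⟩
  set e := Equiv.ofBijective _ hbij
  have h1 : (M.submatrix (fun i : s => (i : Fin n)) (fun j : s => (j : Fin n))).submatrix e e
      = M.submatrix u u := by
    ext i j
    simp [e, Equiv.ofBijective, Matrix.submatrix]
  calc (M.submatrix u u).det
      = ((M.submatrix (fun i : s => (i : Fin n)) (fun j : s => (j : Fin n))).submatrix e e).det := by
        rw [h1]
    _ = principalMinor M s := Matrix.det_submatrix_equiv_self e _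

lemma det_add_smul_one_expand {m : ℕ} (A : Matrix (Fin m) (Fin m) ℝ) (ε : ℝ) :
    (A + ε • (1 : Matrix (Fin m) (Fin m) ℝ)).det
      = ∑ S : Finset (Fin m), ε ^ Sᶜ.card * principalMinor A S := by
  classical
  have h0 : (A + ε • (1 : Matrix (Fin m) (Fin m) ℝ)).det
      = (Matrix.detRowAlternating : _).toMultilinearMap
        ((fun i => A i) + (fun i => ε • (1 : Matrix (Fin m) (Fin m) ℝ) i)) := rfl
  rw [h0, MultilinearMap.map_add_univ]
  refine Finset.sum_congr rfl fun S _ => ?_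
  have hp : S.piecewise (fun i => A i) (fun i => ε • (1 : Matrix (Fin m) (Fin m) ℝ) i)
      = Sᶜ.piecewise (fun i => ε • (Sᶜ.piecewise (fun i => (1 : Matrix (Fin m) (Fin m) ℝ) i)
          (fun i => A i)) i) (Sᶜ.piecewise (fun i => (1 : Matrix (Fin m) (Fin m) ℝ) i)
          (fun i => A i)) := by
    rw [← Finset.piecewise_compl S (fun i => ε • (1 : Matrix (Fin m) (Fin m) ℝ) i) (fun i => A i)]
    funext i
    by_cases hi : i ∈ Sᶜ
    · simp [Finset.piecewise_eq_of_mem _ _ _ hi]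
    · simp [Finset.piecewise_eq_of_notMem _ _ _ hi]
  rw [hp, MultilinearMap.map_piecewise_smul]
  rw [Finset.prod_const, smul_eq_mul]
  congr 1
  rw [Finset.piecewise_compl]
  exact det_piecewise_id A S

lemma key_pos {m : ℕ} (A : Matrix (Fin m) (Fin m) ℝ) {ε : ℝ} (hε : 0 < ε)
    (h : ∀ t : Finset (Fin m), 0 ≤ principalMinor A t) :
    0 < (A + ε • (1 : Matrix (Fin m) (Fin m) ℝ)).det := by
  classical
  rw [det_add_smul_one_expand]
  refine Finset.sum_pos' (fun S _ => mul_nonneg (by positivity) (h S)) ⟨∅, Finset.mem_univ _, ?_⟩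
  have hpm : principalMinor A (∅ : Finset (Fin m)) = 1 := by
    haveI : IsEmpty {x : Fin m // x ∈ (∅ : Finset (Fin m))} :=
      ⟨fun x => (Finset.notMem_empty _ x.2)⟩
    simp [principalMinor, Matrix.det_isEmpty]
  rw [hpm, mul_one]
  positivity

/-- a Z-matrix is a quasi M-matrix iff `M + εI` is a quasi
non-singular M-matrix for every `ε > 0`. -/
theorem stmt_8 (n : ℕ) (M : Matrix (Fin n) (Fin n) ℝ)
    (hZ : ∀ i j, i ≠ j → M i j ≤ 0) :
    (∀ s : Finset (Fin n), s ≠ Finset.univ → 0 ≤ principalMinor M s) ↔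
    (∀ ε : ℝ, 0 < ε → ∀ s : Finset (Fin n), s ≠ Finset.univ →
      0 < principalMinor (M + ε • (1 : Matrix (Fin n) (Fin n) ℝ)) s) := by
  classical
  constructor
  · intro h ε hε s hs
    -- reindex `s` by `Fin s.card`
    set v : Fin s.card → Fin n := fun i => ((s.equivFin.symm i : s) : Fin n) with hv
    have hvinj : Function.Injective v := by
      intro a b hab
      exact s.equivFin.symm.injective (Subtype.ext hab)
    have himg : Finset.image v Finset.univ = s := by
      apply Finset.ext
      intro a
      simp only [Finset.mem_image, Finset.mem_univ, true_and]
      constructor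
      · rintro ⟨i, rfl⟩; exact (s.equivFin.symm i).2
      · intro ha; exact ⟨s.equivFin ⟨a, ha⟩, by simp [hv]⟩
    set A : Matrix (Fin s.card) (Fin s.card) ℝ := M.submatrix v v with hA
    have hsub : (M + ε • (1 : Matrix (Fin n) (Fin n) ℝ)).submatrix v v
        = A + ε • (1 : Matrix (Fin s.card) (Fin s.card) ℝ) := by
      ext i j
      simp [A, Matrix.submatrix, Matrix.one_apply, hvinj.eq_iff]
    have h1 : principalMinor (M + ε • (1 : Matrix (Fin n) (Fin n) ℝ)) s
        = (A + ε • (1 : Matrix (Fin s.card) (Fin s.card) ℝ)).det := by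
      rw [← hsub, det_submatrix_injective _ v hvinj, himg]
    rw [h1]
    refine key_pos A hε fun t => ?_
    have ht : principalMinor A t
        = principalMinor M (Finset.image (fun i : t => v i) Finset.univ) := by
      have : (A.submatrix (fun i : t => (i : Fin s.card)) (fun j : t => (j : Fin s.card)))
          = M.submatrix (fun i : t => v i) (fun j : t => v j) := rfl
      rw [principalMinor, this,
        det_submatrix_injective M (fun i : t => v i)
          (fun a b hab => Subtype.ext ((hvinj hab) ▸ rfl : (a : Fin s.card) = b))]
    rw [ht]
    refine h _ fun hcon => hs ?_
    have hsubset : Finset.image (fun i : t => v i) Finset.univ ⊆ s := by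
      intro a ha
      obtain ⟨i, -, hi⟩ := Finset.mem_image.mp ha
      rw [← himg]
      exact Finset.mem_image.mpr ⟨(i : Fin s.card), Finset.mem_univ _, hi⟩
    exact Finset.univ_subset_iff.mp (hcon ▸ hsubset)
  · intro h s hs
    -- continuity as ε → 0⁺
    have hc : Continuous fun ε : ℝ =>
        principalMinor (M + ε • (1 : Matrix (Fin n) (Fin n) ℝ)) s := by
      unfold principalMinor
      apply Continuous.matrix_det
      apply continuous_matrix
      intro i j
      simp only [Matrix.submatrix_apply, Matrix.add_apply, Matrix.smul_apply, smul_eq_mul]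
      fun_prop
    have h0 : principalMinor (M + (0:ℝ) • (1 : Matrix (Fin n) (Fin n) ℝ)) s
        = principalMinor M s := by
      norm_num
    have htend : Filter.Tendsto (fun ε : ℝ =>
        principalMinor (M + ε • (1 : Matrix (Fin n) (Fin n) ℝ)) s)
        (nhdsWithin 0 (Set.Ioi 0)) (nhds (principalMinor M s)) := by
      rw [← h0]
      exact (hc.tendsto 0).mono_left nhdsWithin_le_nhds
    refine ge_of_tendsto htend ?_
    filter_upwards [self_mem_nhdsWithin] with ε hε
    exact le_of_lt (h ε hε s hs)
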